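/- A single transmitted symbol from GF(2) cannot simultaneously satisfy two receivers i and j that are not cross neighbors: if j ∉ S_i or i ∉ S_j, then there is no function f : GF(2)^n → GF(2) such that both w_i is determined by (f(w), (w_k)_{k∈S_i}) and w_j is determined by (f(w), (w_k)_{k∈S_j}). -/
import Mathlib

private lemma flip_step {n : ℕ} (S : Fin n → Finset (Fin n)) (k : Fin n)
    (hk : k ∉ S k) (f : (Fin n → ZMod 2) → ZMod 2)
    (g : ZMod 2 → ({m : Fin n // m ∈ S k} → ZMod 2) → ZMod 2)
    (hg : ∀ w : Fin n → ZMod 2, g (f w) (fun m => w m.1) = w k)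
    (w : Fin n → ZMod 2) :
    f (Function.update w k (w k + 1)) = f w + 1 := by
  set w' := Function.update w k (w k + 1) with hw'
  have hside : (fun m : {m : Fin n // m ∈ S k} => w' m.1)
      = fun m => w m.1 := by
    funext m
    have : m.1 ≠ k := fun h => hk (by simpa [h] using m.2)
    simp [hw', Function.update_of_ne this]
  have h1 := hg w'
  rw [hside] at h1
  have h2 := hg w
  have hne : f w' ≠ f w := by
    intro h
    rw [h, h2] at h1
    have : w k + 1 = w k := by
      simpa [hw'] using h1
    simpa using this
  have : ∀ a b : ZMod 2, a ≠ b → a = b + 1 := by decide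
  exact this _ _ hne

private lemma aux_not_cross {n : ℕ} (S : Fin n → Finset (Fin n)) (i j : Fin n)
    (hij : i ≠ j) (hi : i ∉ S i) (hj : j ∉ S j) (hji : j ∉ S i)
    (f : (Fin n → ZMod 2) → ZMod 2)
    (gi : ZMod 2 → ({m : Fin n // m ∈ S i} → ZMod 2) → ZMod 2)
    (hgi : ∀ w : Fin n → ZMod 2, gi (f w) (fun m => w m.1) = w i)
    (gj : ZMod 2 → ({m : Fin n // m ∈ S j} → ZMod 2) → ZMod 2)
    (hgj : ∀ w : Fin n → ZMod 2, gj (f w) (fun m => w m.1) = w j) :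
    False := by
  classical
  set w : Fin n → ZMod 2 := fun _ => 0 with hw
  set w1 := Function.update w i (w i + 1) with hw1
  set w2 := Function.update w1 j (w1 j + 1) with hw2
  have hfi : f w1 = f w + 1 := flip_step S i hi f gi hgi w
  have hfj : f w2 = f w1 + 1 := flip_step S j hj f gj hgj w1
  have hfw2 : f w2 = f w := by
    rw [hfj, hfi]
    have : ∀ a : ZMod 2, a + 1 + 1 = a := by decide
    exact this _
  -- receiver i sees the same side info for w and w2
  have hside : (fun m : {m : Fin n // m ∈ S i} => w2 m.1)
      = fun m => w m.1 := by
    funext m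
    have hmi : m.1 ≠ i := fun h => hi (by simpa [h] using m.2)
    have hmj : m.1 ≠ j := fun h => hji (by simpa [h] using m.2)
    simp [hw2, hw1, Function.update_of_ne hmi, Function.update_of_ne hmj]
  have h1 := hgi w2
  rw [hside, hfw2, hgi w] at h1
  have hw2i : w2 i = w i + 1 := by
    simp [hw2, hw1, Function.update_of_ne hij]
  rw [hw2i] at h1
  have : (w i : ZMod 2) ≠ w i + 1 := by
    have : ∀ a : ZMod 2, a ≠ a + 1 := by decide
    exact this _
  exact this h1

/-- A single GF(2) transmission cannot simultaneously satisfy two receivers `i`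
and `j` that are not cross neighbors: if `j ∉ S i` or `i ∉ S j`, then no single
function `f : GF(2)^n → GF(2)` allows receiver `i` to decode `w i` from
`f w` and its side information, and receiver `j` to decode `w j` likewise. -/
theorem single_transmission_not_crossNeighbors
    (n : ℕ) (S : Fin n → Finset (Fin n)) (i j : Fin n) (hij : i ≠ j)
    (hi : i ∉ S i) (hj : j ∉ S j)
    (hnc : j ∉ S i ∨ i ∉ S j) :
    ¬ ∃ f : (Fin n → ZMod 2) → ZMod 2,
        (∃ gi : ZMod 2 → ({m : Fin n // m ∈ S i} → ZMod 2) → ZMod 2,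
          ∀ w : Fin n → ZMod 2, gi (f w) (fun m => w m.1) = w i) ∧
        (∃ gj : ZMod 2 → ({m : Fin n // m ∈ S j} → ZMod 2) → ZMod 2,
          ∀ w : Fin n → ZMod 2, gj (f w) (fun m => w m.1) = w j) := by
  rintro ⟨f, ⟨gi, hgi⟩, ⟨gj, hgj⟩⟩
  rcases hnc with h | h
  · exact aux_not_cross S i j hij hi hj h f gi hgi gj hgj
  · exact aux_not_cross S j i hij.symm hj hi h f gj hgj gi hgi
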